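/- If Σ̂_CD(k) = (k/((p²−1)p))·[(pk−1)·Σ̂_x + (p−k)·Tr(Σ̂_x)·I_p] with Σ̂_x positive semidefinite, nonzero, and 1 ≤ k < p, then Σ̂_CD(k) is positive definite (in particular invertible) even when Σ̂_x is singular. -/

import Mathlib

open Matrix

lemma posDef_smul' {n : Type*} [Fintype n] {M : Matrix n n ℝ} (hM : M.PosDef)
    {c : ℝ} (hc : 0 < c) : (c • M).PosDef := by
  refine ⟨?_, fun x hx => ?_⟩
  · unfold Matrix.IsHermitian
    rw [conjTranspose_smul, hM.1]
    simp
  · have e : (x.sum fun i xi => x.sum fun j xj => star xi * (c • M) i j * xj) = c * (x.sum fun i xi => x.sum fun j xj => star xi * M i j * xj) := by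
      simp only [Finsupp.sum, Finset.mul_sum, Matrix.smul_apply, smul_eq_mul]
      refine Finset.sum_congr rfl fun i _ => Finset.sum_congr rfl fun j _ => ?_
      ring
    rw [e]
    exact mul_pos hc (hM.2 hx)

lemma posSemidef_smul' {n : Type*} [Fintype n] {M : Matrix n n ℝ} (hM : M.PosSemidef)
    {c : ℝ} (hc : 0 ≤ c) : (c • M).PosSemidef := by
  refine ⟨?_, fun x => ?_⟩
  · unfold Matrix.IsHermitian
    rw [conjTranspose_smul, hM.1]
    simp
  · have e : (x.sum fun i xi => x.sum fun j xj => star xi * (c • M) i j * xj) = c * (x.sum fun i xi => x.sum fun j xj => star xi * M i j * xj) := by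
      simp only [Finsupp.sum, Finset.mul_sum, Matrix.smul_apply, smul_eq_mul]
      refine Finset.sum_congr rfl fun i _ => Finset.sum_congr rfl fun j _ => ?_
      ring
    rw [e]
    exact mul_nonneg hc (hM.2 x)

/-- The CD estimator `(k/((p²−1)p)) • [(pk−1) Σ̂ₓ + (p−k) Tr(Σ̂ₓ) I]` is positive
definite whenever `Σ̂ₓ` is PSD with positive trace and `1 ≤ k < p`. -/
theorem cd_estimator_posDef
    (p k : ℕ) (hp : 2 ≤ p) (hk1 : 1 ≤ k) (hkp : k < p)
    (Sx : Matrix (Fin p) (Fin p) ℝ) (hSx : Sx.PosSemidef)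
    (htr : 0 < Sx.trace) :
    (((k : ℝ) / (((p : ℝ) ^ 2 - 1) * p)) •
      (((p : ℝ) * k - 1) • Sx + ((p : ℝ) - k) • Sx.trace • (1 : Matrix (Fin p) (Fin p) ℝ))).PosDef := by
  have hpR : (2 : ℝ) ≤ (p : ℝ) := by exact_mod_cast hp
  have hkR : (1 : ℝ) ≤ (k : ℝ) := by exact_mod_cast hk1
  have hkpR : (k : ℝ) < (p : ℝ) := by exact_mod_cast hkp
  have hc : 0 < (k : ℝ) / (((p : ℝ) ^ 2 - 1) * p) := by
    apply div_pos (by linarith)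
    apply mul_pos (by nlinarith) (by linarith)
  apply posDef_smul' _ hc
  apply Matrix.PosDef.posSemidef_add
  · exact posSemidef_smul' hSx (by nlinarith)
  · exact posDef_smul' (posDef_smul' Matrix.PosDef.one htr) (by linarith)
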